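/- Let F : ℝ^d → ℝ be a function with F(0)=0 whose derivatives vanish at 0 up to order l−1 and whose l-th derivative D^l F(0) ≠ 0. Let (x_n) be a sequence in ℝ^d \ {0} converging to 0 with F(x_n) = 0 for all n, and suppose x_n/‖x_n‖ converges to x. Then D^l F(0)·[x,…,x] = 0 (the l-th derivative applied l times to x vanishes). -/

import Mathlib

open Filter Topology

theorem stmt8 {d : ℕ} (F : (Fin d → ℝ) → ℝ) (l : ℕ) (hl : 0 < l)
    (hF : ContDiffAt ℝ l F 0) (hF0 : F 0 = 0)
    (hvanish : ∀ j, j < l → iteratedFDeriv ℝ j F 0 = 0)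
    (hne : iteratedFDeriv ℝ l F 0 ≠ 0)
    (x : Fin d → ℝ) (xn : ℕ → (Fin d → ℝ))
    (hxn0 : ∀ n, xn n ≠ 0) (hlim : Tendsto xn atTop (𝓝 0))
    (hFxn : ∀ n, F (xn n) = 0)
    (hdir : Tendsto (fun n => ‖xn n‖⁻¹ • xn n) atTop (𝓝 x)) :
    iteratedFDeriv ℝ l F 0 (fun _ => x) = 0 := by
  obtain ⟨k, rfl⟩ : ∃ k, l = k + 1 := ⟨l - 1, (Nat.succ_pred_eq_of_pos hl).symm⟩
  -- Get an open ball on which F is C^{k+1}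
  obtain ⟨u, hu, hFu⟩ : ∃ u ∈ 𝓝 (0 : Fin d → ℝ), ContDiffOn ℝ (k + 1 : ℕ) F u :=
    hF.contDiffOn le_rfl (by simp)
  obtain ⟨r, hr, hru⟩ := Metric.mem_nhds_iff.1 hu
  set B : Set (Fin d → ℝ) := Metric.ball 0 r with hB
  have hFB : ContDiffOn ℝ (k + 1 : ℕ) F B := hFu.mono hru
  have hBu : UniqueDiffOn ℝ B := Metric.isOpen_ball.uniqueDiffOn
  have hp : HasFTaylorSeriesUpToOn (k + 1 : ℕ) F (ftaylorSeriesWithin ℝ F B) B :=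
    hFB.ftaylorSeriesWithin hBu
  -- the key pointwise statement for small xn
  have key : ∀ n, ‖xn n‖ < r → ∃ ξ ∈ Set.Ioo (0 : ℝ) 1,
      iteratedFDeriv ℝ (k + 1) F (ξ • xn n) (fun _ => xn n) = 0 := by
    intro n hn
    set v := xn n with hv
    set L : ℝ →L[ℝ] (Fin d → ℝ) :=
      ContinuousLinearMap.smulRight (ContinuousLinearMap.id ℝ ℝ) v with hL
    have hLt : ∀ t : ℝ, L t = t • v := fun t => rfl
    have hsub : Set.Icc (0 : ℝ) 1 ⊆ L ⁻¹' B := by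
      intro t ht
      simp only [Set.mem_preimage, hB, Metric.mem_ball, dist_zero_right, hLt]
      calc ‖t • v‖ = |t| * ‖v‖ := by rw [norm_smul, Real.norm_eq_abs]
        _ ≤ 1 * ‖v‖ := by
            apply mul_le_mul_of_nonneg_right _ (norm_nonneg _)
            rw [abs_le]; exact ⟨by linarith [ht.1], ht.2⟩
        _ < r := by simpa using hn
    have hUicc : UniqueDiffOn ℝ (Set.Icc (0 : ℝ) 1) := uniqueDiffOn_Icc zero_lt_one
    -- identify iterated derivatives of F ∘ L on [0,1]
    have hder : ∀ m : ℕ, m ≤ k + 1 → ∀ t ∈ Set.Icc (0 : ℝ) 1,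
        iteratedDerivWithin m (F ∘ L) (Set.Icc (0 : ℝ) 1) t
          = iteratedFDeriv ℝ m F (t • v) (fun _ => v) := by
      intro m hm t ht
      have e1 : iteratedFDerivWithin ℝ m (F ∘ L) (Set.Icc (0 : ℝ) 1) t
          = (ftaylorSeriesWithin ℝ F B (L t) m).compContinuousLinearMap (fun _ => L) :=
        (((hp.compContinuousLinearMap L).mono hsub).eq_iteratedFDerivWithin_of_uniqueDiffOn
          (by exact_mod_cast hm) hUicc ht).symm
      rw [iteratedDerivWithin_eq_iteratedFDerivWithin, e1,
        ContinuousMultilinearMap.compContinuousLinearMap_apply]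
      have hmem : L t ∈ B := hsub ht
      have e2 : ftaylorSeriesWithin ℝ F B (L t) m = iteratedFDeriv ℝ m F (L t) := by
        rw [ftaylorSeriesWithin, iteratedFDerivWithin_of_isOpen m Metric.isOpen_ball hmem]
      rw [e2, hLt]
      congr 1
      funext i
      rw [hLt, one_smul]
    -- Taylor's theorem with Lagrange remainder on [0,1]
    have hctd : ContDiffOn ℝ (k + 1 : ℕ) (F ∘ L) (Set.Icc (0 : ℝ) 1) :=
      (hFB.comp (L.contDiff.contDiffOn) (fun t ht => ht)).mono hsub
    have hdiff : DifferentiableOn ℝ (iteratedDerivWithin k (F ∘ L) (Set.Icc (0 : ℝ) 1))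
        (Set.Ioo (0 : ℝ) 1) :=
      (hctd.differentiableOn_iteratedDerivWithin (by exact_mod_cast Nat.lt_succ_self k)
        hUicc).mono Set.Ioo_subset_Icc_self
    obtain ⟨ξ, hξ, hTay⟩ :=
      taylor_mean_remainder_lagrange (f := F ∘ L) (x₀ := 0) (x := 1) (n := k) zero_ne_one
        (by rw [Set.uIcc_of_le zero_le_one]; exact hctd.of_le (by exact_mod_cast Nat.le_succ k))
        (by rw [Set.uIcc_of_le zero_le_one, Set.uIoo_of_le zero_le_one]; exact hdiff)
    rw [Set.uIoo_of_le zero_le_one] at hξ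
    rw [Set.uIcc_of_le zero_le_one] at hTay
    have hpoly : taylorWithinEval (F ∘ L) k (Set.Icc (0 : ℝ) 1) 0 1 = 0 := by
      rw [taylor_within_apply]
      apply Finset.sum_eq_zero
      intro m hm
      have hm' : m < k + 1 := Finset.mem_range.1 hm
      rw [hder m hm'.le 0 (by constructor <;> norm_num)]
      rw [zero_smul, hvanish m hm']
      simp
    have hF1 : (F ∘ L) 1 = 0 := by
      simp only [Function.comp_apply, hLt, one_smul]
      exact hFxn n
    rw [hF1, hpoly, sub_zero] at hTay
    have hzero : iteratedDerivWithin (k + 1) (F ∘ L) (Set.Icc (0 : ℝ) 1) ξ = 0 := by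
      have hfac : (((k + 1).factorial : ℕ) : ℝ) ≠ 0 := by
        exact_mod_cast Nat.factorial_ne_zero (k + 1)
      have h1 : (1 - 0 : ℝ) ^ (k + 1) = 1 := by norm_num
      rw [h1, mul_one] at hTay
      have h2 := hTay.symm
      rw [div_eq_zero_iff] at h2
      rcases h2 with h2 | h2
      · exact h2
      · exact absurd h2 hfac
    refine ⟨ξ, hξ, ?_⟩
    rw [← hder (k + 1) le_rfl ξ (Set.Ioo_subset_Icc_self hξ)]
    exact hzero
  -- choose the intermediate points
  have hev : ∀ᶠ n in atTop, ‖xn n‖ < r := by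
    have : Tendsto (fun n => ‖xn n‖) atTop (𝓝 0) := by
      simpa using hlim.norm
    exact this.eventually_lt_const hr
  classical
  set c : ℕ → ℝ := fun n => if h : ‖xn n‖ < r then (key n h).choose else 0 with hc
  have hcIoo : ∀ n, ‖xn n‖ < r → c n ∈ Set.Ioo (0 : ℝ) 1 := by
    intro n h
    simp only [hc, dif_pos h]
    exact (key n h).choose_spec.1
  have hczero : ∀ n, ‖xn n‖ < r →
      iteratedFDeriv ℝ (k + 1) F (c n • xn n) (fun _ => xn n) = 0 := by
    intro n h
    simp only [hc, dif_pos h]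
    exact (key n h).choose_spec.2
  -- the scaled version vanishes eventually
  have hev0 : ∀ᶠ n in atTop,
      iteratedFDeriv ℝ (k + 1) F (c n • xn n) (fun _ => ‖xn n‖⁻¹ • xn n) = 0 := by
    filter_upwards [hev] with n hn
    have := ContinuousMultilinearMap.map_smul_univ
      (iteratedFDeriv ℝ (k + 1) F (c n • xn n)) (fun _ : Fin (k + 1) => ‖xn n‖⁻¹)
      (fun _ => xn n)
    rw [this, hczero n hn, smul_zero]
  -- convergence of the base points
  have hbase : Tendsto (fun n => c n • xn n) atTop (𝓝 0) := by
    refine squeeze_zero_norm' (a := fun n => ‖xn n‖) ?_ ?_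
    · filter_upwards [hev] with n hn
      rw [norm_smul, Real.norm_eq_abs]
      have h1 : |c n| ≤ 1 := by
        have := hcIoo n hn
        rw [abs_le]; constructor <;> [linarith [this.1]; linarith [this.2]]
      calc |c n| * ‖xn n‖ ≤ 1 * ‖xn n‖ :=
            mul_le_mul_of_nonneg_right h1 (norm_nonneg _)
        _ = ‖xn n‖ := one_mul _
    · simpa using hlim.norm
  -- continuity of the top derivative at 0
  have hcont : ContinuousAt (iteratedFDeriv ℝ (k + 1) F) 0 := by
    have h1 : ContinuousOn (iteratedFDerivWithin ℝ (k + 1) F B) B :=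
      hFB.continuousOn_iteratedFDerivWithin (by exact_mod_cast le_rfl) hBu
    have h2 : ContinuousAt (iteratedFDerivWithin ℝ (k + 1) F B) 0 :=
      h1.continuousAt (Metric.isOpen_ball.mem_nhds (by simpa [hB] using hr))
    apply h2.congr
    filter_upwards [Metric.isOpen_ball.mem_nhds (show (0 : Fin d → ℝ) ∈ B by
      simpa [hB] using hr)] with y hy
    exact (iteratedFDerivWithin_of_isOpen (k + 1) Metric.isOpen_ball hy)
  have hA : Tendsto (fun n => iteratedFDeriv ℝ (k + 1) F (c n • xn n)) atTop
      (𝓝 (iteratedFDeriv ℝ (k + 1) F 0)) := by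
    exact (hcont.tendsto).comp hbase
  have hvec : Tendsto (fun n => (fun _ : Fin (k + 1) => ‖xn n‖⁻¹ • xn n)) atTop
      (𝓝 (fun _ : Fin (k + 1) => x)) := by
    rw [tendsto_pi_nhds]
    intro i
    exact hdir
  have heval : Tendsto (fun n =>
      iteratedFDeriv ℝ (k + 1) F (c n • xn n) (fun _ => ‖xn n‖⁻¹ • xn n)) atTop
      (𝓝 (iteratedFDeriv ℝ (k + 1) F 0 (fun _ => x))) := by
    have hc2 : Continuous fun p :
        (ContinuousMultilinearMap ℝ (fun _ : Fin (k + 1) => (Fin d → ℝ)) ℝ)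
          × (Fin (k + 1) → (Fin d → ℝ)) => p.1 p.2 :=
      continuous_eval
    exact (hc2.tendsto _).comp (hA.prodMk_nhds hvec)
  have hfinal : Tendsto (fun _ : ℕ => (0 : ℝ)) atTop
      (𝓝 (iteratedFDeriv ℝ (k + 1) F 0 (fun _ => x))) :=
    heval.congr' (by filter_upwards [hev0] with n hn; exact hn)
  exact (tendsto_nhds_unique tendsto_const_nhds hfinal).symm
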